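/- Let G be a connected finite simple graph with independence number at most 2 and let u be a vertex of G. Then G has a Hamiltonian path starting at u if and only if u is not a cut vertex of G. -/

import Mathlib

open SimpleGraph

variable {V : Type*}

/-- `G` has independence number at most `k`: every independent set has at most `k` vertices. -/
def IndepBound (G : SimpleGraph V) (k : ℕ) : Prop :=
  ∀ s : Finset V, (∀ a ∈ s, ∀ b ∈ s, a ≠ b → ¬ G.Adj a b) → s.card ≤ k

/-- The induced subgraph on `A` has independence number at most `k`. -/
def IndepBoundOn (G : SimpleGraph V) (A : Set V) (k : ℕ) : Prop :=
  ∀ s : Finset V, ↑s ⊆ A → (∀ a ∈ s, ∀ b ∈ s, a ≠ b → ¬ G.Adj a b) → s.card ≤ k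

/-- `x` is a cut vertex (articulation point): `G - x` is disconnected. -/
def IsCutVertex (G : SimpleGraph V) (x : V) : Prop :=
  ¬ (G.induce ({x}ᶜ : Set V)).Preconnected

/-- `S` is a vertex cut: `G - S` is disconnected. -/
def IsCutSet (G : SimpleGraph V) (S : Set V) : Prop :=
  ¬ (G.induce Sᶜ).Preconnected

/-- `G` has a Hamiltonian path with endpoints `u` and `v`. -/
def HasHamPathBetween [DecidableEq V] (G : SimpleGraph V) (u v : V) : Prop :=
  ∃ p : G.Walk u v, p.IsHamiltonian

/-- `G` has a Hamiltonian path starting at `u`. -/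
def HasHamPathFrom [DecidableEq V] (G : SimpleGraph V) (u : V) : Prop :=
  ∃ v, ∃ p : G.Walk u v, p.IsHamiltonian

/-- `G` has a Hamiltonian path. -/
def HasHamPath [DecidableEq V] (G : SimpleGraph V) : Prop :=
  ∃ u v, ∃ p : G.Walk u v, p.IsHamiltonian

/-- `G` has a path cover of size two: two vertex-disjoint paths, one starting at `u`
and the other starting at `v`, whose vertex sets partition `V(G)`. -/
def HasPathCover2 (G : SimpleGraph V) (u v : V) : Prop :=
  ∃ (a b : V) (p : G.Walk u a) (q : G.Walk v b), p.IsPath ∧ q.IsPath ∧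
    ∀ w, (w ∈ p.support ∧ w ∉ q.support) ∨ (w ∈ q.support ∧ w ∉ p.support)

/-- `G` is `s`-connected: more than `s` vertices, and removing any fewer than `s`
vertices leaves the graph connected. -/
def SConnected (G : SimpleGraph V) (s : ℕ) : Prop :=
  s < Nat.card V ∧ ∀ S : Set V, S.ncard < s → (G.induce Sᶜ).Connected


def liftWalk {G : SimpleGraph V} {s : Set V} :
    ∀ {a b : V} (p : G.Walk a b) (hp : ∀ x ∈ p.support, x ∈ s),
      (G.induce s).Walk ⟨a, hp a p.start_mem_support⟩ ⟨b, hp b p.end_mem_support⟩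
  | _, _, Walk.nil, _ => Walk.nil
  | _, _, Walk.cons h p, hp =>
      Walk.cons (by exact h) (liftWalk p fun x hx => hp x (by simp [hx]))

lemma liftWalk_support {G : SimpleGraph V} {s : Set V} :
    ∀ {a b : V} (p : G.Walk a b) (hp : ∀ x ∈ p.support, x ∈ s),
      (liftWalk p hp).support.map Subtype.val = p.support
  | _, _, Walk.nil, _ => rfl
  | _, _, Walk.cons h p, hp => by
      simp only [liftWalk, Walk.support_cons, List.map_cons, liftWalk_support]
      exact congrArg (List.cons _) (liftWalk_support p _)

lemma mem_liftWalk_support {G : SimpleGraph V} {s : Set V} {a b : V}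
    (p : G.Walk a b) (hp : ∀ x ∈ p.support, x ∈ s) (x : s) :
    x ∈ (liftWalk p hp).support ↔ (x : V) ∈ p.support := by
  rw [← liftWalk_support p hp, List.mem_map]
  constructor
  · rintro hx; exact ⟨x, hx, rfl⟩
  · rintro ⟨y, hy, hxy⟩; rwa [Subtype.val_injective hxy] at hy

lemma notCutVertex_of_hamFrom [DecidableEq V] {G : SimpleGraph V} {u v : V}
    (p : G.Walk u v) (hp : p.IsHamiltonian) :
    ¬ (¬ (G.induce ({u}ᶜ : Set V)).Preconnected) := by
  rw [not_not]
  intro a b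
  have hcount := hp
  -- p is not nil since a.val ≠ u
  have hanu : (a : V) ≠ u := a.2
  have hnil : ¬ p.Nil := by
    intro hn
    have hmem := hp.mem_support (a : V)
    rw [Walk.nil_iff_support_eq.mp hn] at hmem
    exact hanu (by simpa using hmem)
  -- the tail of p avoids u
  have hhead : p.support = u :: p.support.tail := p.support_eq_cons
  have hunotail : u ∉ p.support.tail := by
    have h1 : p.support.count u = 1 := hp u
    rw [hhead, List.count_cons_self] at h1
    simpa using List.count_eq_zero.mp (by omega)
  have htails : ∀ x ∈ p.tail.support, x ∈ ({u}ᶜ : Set V) := by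
    intro x hx
    rw [Walk.support_tail_of_not_nil p hnil] at hx
    simp only [Set.mem_compl_iff, Set.mem_singleton_iff]
    exact fun h => hunotail (h ▸ hx)
  have hmem : ∀ c : ({u}ᶜ : Set V), (c : V) ∈ p.tail.support := by
    intro c
    rw [Walk.support_tail_of_not_nil p hnil]
    have := hp.mem_support (c : V)
    rw [hhead] at this
    rcases List.mem_cons.mp this with h | h
    · exact absurd h c.2
    · exact h
  -- lift the tail
  set q := liftWalk p.tail htails with hq
  have hstart := q.start_mem_support
  have ha' : a ∈ q.support := by rw [mem_liftWalk_support]; exact hmem a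
  have hb' : b ∈ q.support := by rw [mem_liftWalk_support]; exact hmem b
  have ra : (G.induce ({u}ᶜ : Set V)).Reachable _ a := ⟨q.takeUntil a ha'⟩
  have rb : (G.induce ({u}ᶜ : Set V)).Reachable _ b := ⟨q.takeUntil b hb'⟩
  exact ra.symm.trans rb

lemma exists_noncut [Fintype V] (G : SimpleGraph V) (hc : G.Connected)
    [Nonempty V] : ∃ v : V, (G.induce ({v}ᶜ : Set V)).Preconnected := by
  classical
  obtain ⟨r⟩ := ‹Nonempty V›
  obtain ⟨v, -, hv⟩ := Finset.exists_max_image Finset.univ (G.dist r) ⟨r, Finset.mem_univ r⟩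
  refine ⟨v, ?_⟩
  have key : ∀ w : V, w ≠ v → ∃ p : G.Walk r w, ∀ x ∈ p.support, x ∈ ({v}ᶜ : Set V) := by
    intro w hw
    obtain ⟨p, hplen⟩ := hc.exists_walk_length_eq_dist r w
    refine ⟨p, fun x hx => ?_⟩
    simp only [Set.mem_compl_iff, Set.mem_singleton_iff]
    rintro rfl
    -- v lies on a shortest r-w path; derive contradiction
    have h1 : G.dist r x ≤ (p.takeUntil x hx).length := dist_le _
    have h2 : G.dist x w ≤ (p.dropUntil x hx).length := dist_le _
    have h3 : (p.takeUntil x hx).length + (p.dropUntil x hx).length = p.length := by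
      rw [← Walk.length_append, Walk.take_spec]
    have h4 : G.dist r w ≤ G.dist r x := hv w (Finset.mem_univ w)
    have h5 : G.dist x w = 0 := by omega
    exact hw ((hc.dist_eq_zero_iff).mp h5).symm
  intro a b
  obtain ⟨pa, hpa⟩ := key a a.2
  obtain ⟨pb, hpb⟩ := key b b.2
  have hr : r ∈ ({v}ᶜ : Set V) := hpa r pa.start_mem_support
  have ra : (G.induce ({v}ᶜ : Set V)).Reachable ⟨r, hr⟩ a := by
    have := Walk.reachable (liftWalk pa hpa)
    convert this using 2
  have rb : (G.induce ({v}ᶜ : Set V)).Reachable ⟨r, hr⟩ b := by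
    have := Walk.reachable (liftWalk pb hpb)
    convert this using 2
  exact ra.symm.trans rb

lemma indepBound_induce [DecidableEq V] {G : SimpleGraph V} {k : ℕ} (h : IndepBound G k)
    (s : Set V) : IndepBound (G.induce s) k := by
  classical
  intro t ht
  have hcard : (t.image (Subtype.val)).card = t.card :=
    Finset.card_image_of_injective t Subtype.val_injective
  rw [← hcard]
  apply h
  intro a ha b hb hab
  simp only [Finset.mem_image] at ha hb
  obtain ⟨a', ha', rfl⟩ := ha
  obtain ⟨b', hb', rfl⟩ := hb
  exact ht a' ha' b' hb' (fun h' => hab (by rw [h']))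

lemma card_compl_singleton [Fintype V] [DecidableEq V] (u : V) :
    Fintype.card ({u}ᶜ : Set V) = Fintype.card V - 1 := by
  rw [Fintype.card_compl_set]
  simp

lemma finish_lemma [DecidableEq V] (G : SimpleGraph V)
    (hc : G.Connected) (hα : IndepBound G 2) (u v b : V) (q : G.Walk v b)
    (hq : q.IsPath) (hcov : ∀ x : V, x ≠ u ↔ x ∈ q.support) :
    HasHamPathFrom G u := by
  classical
  have hu : u ∉ q.support := fun h => (hcov u).mpr h rfl
  have hvu : v ≠ u := (hcov v).mpr q.start_mem_support
  have hbu : b ≠ u := (hcov b).mpr q.end_mem_support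
  -- a neighbor x of u
  obtain ⟨p0⟩ := hc.preconnected u v
  have hp0nil : ¬ p0.Nil := by
    intro hn
    have := Walk.nil_iff_support_eq.mp hn
    have hv := p0.end_mem_support
    rw [this] at hv
    exact hvu (by simpa using hv)
  set x := p0.getVert 1 with hxdef
  have hux : G.Adj u x := Walk.adj_snd hp0nil
  have hxu : x ≠ u := hux.ne'
  by_cases hadjv : G.Adj u v
  · exact ⟨b, Walk.cons hadjv q, ((hq.cons hu).isHamiltonian_of_mem (by
      intro w
      rw [Walk.support_cons, List.mem_cons]
      by_cases hwu : w = u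
      · exact Or.inl hwu
      · exact Or.inr ((hcov w).mp hwu)))⟩
  by_cases hadjb : G.Adj u b
  · refine ⟨v, Walk.cons hadjb q.reverse, ((hq.reverse.cons (by
      rw [Walk.support_reverse, List.mem_reverse]; exact hu)).isHamiltonian_of_mem (by
      intro w
      rw [Walk.support_cons, List.mem_cons, Walk.support_reverse, List.mem_reverse]
      by_cases hwu : w = u
      · exact Or.inl hwu
      · exact Or.inr ((hcov w).mp hwu)))⟩
  -- main case
  have hvb : v ≠ b := by
    rintro rfl
    have : q = Walk.nil := (Walk.isPath_iff_eq_nil (p := q)).mp hq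
    have hxmem : x ∈ q.support := (hcov x).mp hxu
    rw [this] at hxmem
    simp only [Walk.support_nil, List.mem_singleton] at hxmem
    exact hadjv (hxmem ▸ hux)
  have hbv : G.Adj b v := by
    by_contra hbv
    have h3 : ({u, v, b} : Finset V).card = 3 := by
      rw [Finset.card_insert_of_notMem (by simp [Ne.symm hvu, Ne.symm hbu]),
        Finset.card_insert_of_notMem (by simp [hvb])]
      rfl
    have := hα {u, v, b} (by
      intro a ha c hc' hac
      simp only [Finset.mem_insert, Finset.mem_singleton] at ha hc'
      rcases ha with rfl | rfl | rfl <;> rcases hc' with rfl | rfl | rfl <;>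
        first
          | exact absurd rfl hac
          | exact hadjv
          | exact hadjb
          | exact fun h => hadjv h.symm
          | exact fun h => hadjb h.symm
          | exact fun h => hbv h.symm
          | exact hbv)
    omega
  set c := q.concat hbv with hcdef
  have hcsup : c.support = q.support ++ [v] := by
    rw [hcdef, Walk.support_concat]
  have hqcons : q.support = v :: q.support.tail := q.support_eq_cons
  have hctail : c.support.tail = q.support.tail ++ [v] := by
    rw [hcsup]; nth_rewrite 1 [hqcons]; rfl
  have hvnotqt : v ∉ q.support.tail := by
    have := hq.support_nodup
    rw [hqcons] at this
    exact (List.nodup_cons.mp this).1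
  have hctnodup : c.support.tail.Nodup := by
    rw [hctail]
    refine List.Nodup.append ?_ (List.nodup_singleton v) ?_
    · have := hq.support_nodup; rw [hqcons] at this; exact (List.nodup_cons.mp this).2
    · intro a ha hb'
      simp only [List.mem_singleton] at hb'
      exact hvnotqt (hb' ▸ ha)
  have hmem_ct : ∀ y : V, y ≠ u ↔ y ∈ c.support.tail := by
    intro y
    rw [hctail, List.mem_append, List.mem_singleton, hcov y]
    constructor
    · intro h
      rcases List.mem_cons.mp (by rw [← hqcons]; exact h) with h | h
      · exact Or.inr h
      · exact Or.inl h
    · rintro (h | rfl)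
      · rw [hqcons]; exact List.mem_cons_of_mem _ h
      · exact q.start_mem_support
  have hxin : x ∈ c.support := by
    rw [hcsup, List.mem_append]
    exact Or.inl ((hcov x).mp hxu)
  set d := c.rotate x hxin with hddef
  have hrot : d.support.tail ~r c.support.tail := Walk.support_rotate c x hxin
  have hdnil : ¬ d.Nil := by
    intro hn
    have h1 : d.support = [x] := Walk.nil_iff_support_eq.mp hn
    have h2 : v ∈ d.support.tail := (hrot.mem_iff).mpr ((hmem_ct v).mp hvu)
    rw [h1] at h2
    simp at h2
  set e := d.tail with hedef
  have hesup : e.support = d.support.tail := Walk.support_tail_of_not_nil d hdnil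
  have hepath : e.IsPath := Walk.IsPath.mk' (by rw [hesup]; exact hrot.nodup_iff.mpr hctnodup)
  have hmem_e : ∀ y : V, y ≠ u ↔ y ∈ e.support := by
    intro y
    rw [hesup, hrot.mem_iff]
    exact hmem_ct y
  refine ⟨d.getVert 1, Walk.cons hux e.reverse, ?_⟩
  refine (hepath.reverse.cons (by
    rw [Walk.support_reverse, List.mem_reverse]
    exact fun h => (hmem_e u).mpr h rfl)).isHamiltonian_of_mem ?_
  intro w
  rw [Walk.support_cons, List.mem_cons, Walk.support_reverse, List.mem_reverse]
  by_cases hwu : w = u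
  · exact Or.inl hwu
  · exact Or.inr ((hmem_e w).mp hwu)


lemma hamFrom_of_noncut : ∀ (n : ℕ) (V : Type*) [Fintype V] [DecidableEq V]
    (G : SimpleGraph V), Fintype.card V ≤ n → G.Connected → IndepBound G 2 →
    ∀ u : V, (G.induce ({u}ᶜ : Set V)).Preconnected → HasHamPathFrom G u := by
  intro n
  induction n with
  | zero =>
    intro V _ _ G hn hc _ u _
    exact absurd (Fintype.card_pos_iff.mpr ⟨u⟩) (by omega)
  | succ n ih =>
    intro V _ _ G hn hc hα u hpre
    by_cases h1 : Fintype.card V = 1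
    · refine ⟨u, Walk.nil, fun a => ?_⟩
      obtain ⟨w, hw⟩ := Fintype.card_eq_one_iff.mp h1
      have : a = u := (hw a).trans (hw u).symm
      simp [this]
    · have h2 : 2 ≤ Fintype.card V := by
        have := Fintype.card_pos_iff.mpr ⟨u⟩; omega
      obtain ⟨w0, hw0⟩ := Fintype.exists_ne_of_one_lt_card (by omega) u
      haveI : Nonempty ({u}ᶜ : Set V) := ⟨⟨w0, by simpa using hw0⟩⟩
      have hconn' : (G.induce ({u}ᶜ : Set V)).Connected := ⟨hpre⟩
      obtain ⟨v', hv'⟩ := exists_noncut (G.induce ({u}ᶜ : Set V)) hconn'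
      have hcard : Fintype.card ({u}ᶜ : Set V) ≤ n := by
        rw [card_compl_singleton]; omega
      obtain ⟨b', p', hp'⟩ := ih ({u}ᶜ : Set V) (G.induce ({u}ᶜ : Set V)) hcard hconn'
        (indepBound_induce hα _) v' hv'
      set q := p'.map (SimpleGraph.Embedding.induce ({u}ᶜ : Set V)).toHom with hqdef
      have hqpath : q.IsPath :=
        Walk.map_isPath_of_injective Subtype.val_injective hp'.isPath
      have hqsup : q.support = p'.support.map Subtype.val := by
        rw [hqdef, Walk.support_map]
        rfl
      have hcov : ∀ x : V, x ≠ u ↔ x ∈ q.support := by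
        intro x
        rw [hqsup, List.mem_map]
        constructor
        · intro hx
          exact ⟨⟨x, by simpa using hx⟩, hp'.mem_support _, rfl⟩
        · rintro ⟨y, -, rfl⟩
          exact Set.mem_compl_singleton_iff.mp y.2
      exact finish_lemma G hc hα u _ _ q hqpath hcov

/-- A connected graph with independence number at most 2 has a Hamiltonian path starting
at u iff u is not a cut vertex. -/
theorem stmt_3 [Fintype V] [DecidableEq V] (G : SimpleGraph V)
    (hconn : G.Connected) (hα : IndepBound G 2) (u : V) :
    HasHamPathFrom G u ↔ ¬ IsCutVertex G u := by
  constructor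
  · rintro ⟨v, p, hp⟩
    exact notCutVertex_of_hamFrom p hp
  · intro hcut
    exact hamFrom_of_noncut (Fintype.card V) V G le_rfl hconn hα u (not_not.mp hcut)
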